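/- arXiv:1303.4075 — 2 statements merged into one kernel-verified Lean document; each statement's English description precedes it below -/
import Mathlib

section
/- Let a < b, let n ∈ ℕ with n ≥ 2, and let α : Δ → ℝ be a measurable function with 1/n < α(t,τ) < 1 for all (t,τ) ∈ Δ, where Δ = {(t,τ) ∈ ℝ² : a ≤ τ < t ≤ b}. Then the double integral ∫ₐᵇ ( ∫ₐᵗ (t−τ)^{α(t,τ)−1}/Γ(α(t,τ)) dτ ) dt is finite. -/
open MeasureTheory Real

lemma one_le_Gamma_aux {s : ℝ} (h0 : 0 < s) (h1 : s ≤ 1) : 1 ≤ Real.Gamma s := by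
  rcases eq_or_lt_of_le h1 with rfl | h1
  · simp [Real.Gamma_one]
  have h2s : 0 < 2 - s := by linarith
  have hw1 : (0:ℝ) ≤ 1 / (2 - s) := by positivity
  have hw2 : (0:ℝ) ≤ (1 - s) / (2 - s) := div_nonneg (by linarith) h2s.le
  have hsum : 1 / (2 - s) + (1 - s) / (2 - s) = 1 := by
    field_simp
    ring
  have := Real.convexOn_Gamma.2 (Set.mem_Ioi.mpr h0)
    (Set.mem_Ioi.mpr (by norm_num : (0:ℝ) < 2)) hw1 hw2 hsum
  have hpt : (1 / (2 - s)) • s + ((1 - s) / (2 - s)) • (2:ℝ) = 1 := by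
    simp only [smul_eq_mul]
    field_simp
    ring
  rw [hpt, Real.Gamma_one, Real.Gamma_two] at this
  simp only [smul_eq_mul, mul_one] at this
  have h2 := mul_le_mul_of_nonneg_left this h2s.le
  rw [mul_add, ← mul_assoc] at h2
  rw [mul_one_div_cancel (ne_of_gt h2s), one_mul, mul_div_cancel₀ _ (ne_of_gt h2s)] at h2
  linarith

/-- For `a < b`, `n ≥ 2` and a measurable `α` with
`1/n < α(t,τ) < 1` on `Δ = {(t,τ) : a ≤ τ < t ≤ b}`, the (nonnegative) double
integral `∫ₐᵇ (∫ₐᵗ (t−τ)^(α(t,τ)−1) / Γ(α(t,τ)) dτ) dt` is finite. -/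
theorem double_integral_variable_order_kernel_finite
    (a b : ℝ) (hab : a < b) (n : ℕ) (hn : 2 ≤ n)
    (α : ℝ → ℝ → ℝ)
    (hαm : Measurable fun p : ℝ × ℝ => α p.1 p.2)
    (hα : ∀ t τ, a ≤ τ → τ < t → t ≤ b → 1 / (n : ℝ) < α t τ ∧ α t τ < 1) :
    (∫⁻ t in Set.Ioc a b, ∫⁻ τ in Set.Ioo a t,
        ENNReal.ofReal ((t - τ) ^ (α t τ - 1) / Real.Gamma (α t τ))) < ⊤ := by
  have hn0 : (0:ℝ) < (n : ℝ) := by positivity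
  set p : ℝ := 1 / (n : ℝ) with hp_def
  have hp : 0 < p := by positivity
  have hp1 : p ≤ 1 := by
    rw [hp_def, div_le_one hn0]
    exact_mod_cast Nat.one_le_of_lt hn
  have hba : (0:ℝ) < b - a := by linarith
  set K : ℝ := (b - a) ^ p / p + (b - a) with hK_def
  have hKnn : 0 ≤ K := by positivity
  -- inner bound
  have key : ∀ t ∈ Set.Ioc a b,
      (∫⁻ τ in Set.Ioo a t, ENNReal.ofReal ((t - τ) ^ (α t τ - 1) / Real.Gamma (α t τ)))
        ≤ ENNReal.ofReal K := by
    intro t ht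
    have hat : a < t := ht.1
    -- the dominating function
    set g : ℝ → ℝ := fun τ => (t - τ) ^ (p - 1) + 1 with hg_def
    have hbound : ∀ τ ∈ Set.Ioo a t,
        ENNReal.ofReal ((t - τ) ^ (α t τ - 1) / Real.Gamma (α t τ)) ≤ ENNReal.ofReal (g τ) := by
      intro τ hτ
      obtain ⟨h1, h2⟩ := hα t τ hτ.1.le hτ.2 ht.2
      have hα0 : 0 < α t τ := lt_trans hp h1
      have hx : 0 < t - τ := by linarith [hτ.2]
      have hΓ : 1 ≤ Real.Gamma (α t τ) := one_le_Gamma_aux hα0 h2.le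
      apply ENNReal.ofReal_le_ofReal
      have step1 : (t - τ) ^ (α t τ - 1) / Real.Gamma (α t τ) ≤ (t - τ) ^ (α t τ - 1) := by
        apply div_le_self (Real.rpow_nonneg hx.le _) hΓ
      refine step1.trans ?_
      rcases le_or_gt (t - τ) 1 with hle | hgt
      · have : (t - τ) ^ (α t τ - 1) ≤ (t - τ) ^ (p - 1) :=
          Real.rpow_le_rpow_of_exponent_ge hx hle (by linarith)
        rw [hg_def]; dsimp only; linarith
      · have : (t - τ) ^ (α t τ - 1) ≤ 1 :=
          Real.rpow_le_one_of_one_le_of_nonpos hgt.le (by linarith)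
        have h2' : 0 ≤ (t - τ) ^ (p - 1) := Real.rpow_nonneg hx.le _
        rw [hg_def]; dsimp only; linarith
    have hII : IntervalIntegrable (fun τ => (t - τ) ^ (p - 1)) volume a t := by
      have h0 : IntervalIntegrable (fun x : ℝ => x ^ (p - 1)) volume (t - a) (t - t) :=
        intervalIntegral.intervalIntegrable_rpow' (by linarith)
      simpa using h0.comp_sub_left t
    have hint : IntegrableOn g (Set.Ioo a t) :=
      (hII.1.mono_set Set.Ioo_subset_Ioc_self).add
        ((integrableOn_const_iff (C := (1:ℝ))).mpr (Or.inr measure_Ioo_lt_top))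
    have heq : (∫⁻ τ in Set.Ioo a t, ENNReal.ofReal (g τ)) = ENNReal.ofReal (∫ τ in Set.Ioo a t, g τ) :=
      (MeasureTheory.ofReal_integral_eq_lintegral_ofReal hint
        ((ae_restrict_iff' measurableSet_Ioo).mpr (Filter.Eventually.of_forall fun τ hτ => by
          have hx : (0:ℝ) < t - τ := by linarith [hτ.2]
          have := Real.rpow_nonneg hx.le (p - 1)
          show (0:ℝ) ≤ g τ
          rw [hg_def]; dsimp only; linarith))).symm
    have hval : (∫ τ in Set.Ioo a t, g τ) ≤ K := by
      rw [← integral_Ioc_eq_integral_Ioo, ← intervalIntegral.integral_of_le hat.le]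
      have hsplit : (∫ τ in a..t, g τ) = (∫ τ in a..t, (t - τ) ^ (p - 1)) + (t - a) := by
        rw [hg_def]
        rw [intervalIntegral.integral_add hII intervalIntegrable_const]
        simp
      have hrpow : (∫ τ in a..t, (t - τ) ^ (p - 1)) = (t - a) ^ p / p := by
        rw [show (fun τ => (t - τ) ^ (p - 1)) = (fun τ => ((fun x : ℝ => x ^ (p - 1)) (t - τ))) from rfl,
          intervalIntegral.integral_comp_sub_left (fun x : ℝ => x ^ (p - 1)) t]
        simp only [sub_self]
        rw [integral_rpow (Or.inl (by linarith))]
        rw [sub_add_cancel, Real.zero_rpow (ne_of_gt hp)]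
        ring
      have hmono : (t - a) ^ p ≤ (b - a) ^ p :=
        Real.rpow_le_rpow (by linarith [hat]) (by linarith [ht.2]) hp.le
      rw [hsplit, hrpow, hK_def]
      have hdiv : (t - a) ^ p / p ≤ (b - a) ^ p / p := by gcongr
      linarith [ht.2]
    calc (∫⁻ τ in Set.Ioo a t, ENNReal.ofReal ((t - τ) ^ (α t τ - 1) / Real.Gamma (α t τ)))
        ≤ ∫⁻ τ in Set.Ioo a t, ENNReal.ofReal (g τ) :=
          MeasureTheory.setLIntegral_mono_ae' measurableSet_Ioo
            (Filter.Eventually.of_forall hbound)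
      _ = ENNReal.ofReal (∫ τ in Set.Ioo a t, g τ) := heq
      _ ≤ ENNReal.ofReal K := ENNReal.ofReal_le_ofReal hval
  calc (∫⁻ t in Set.Ioc a b, ∫⁻ τ in Set.Ioo a t,
        ENNReal.ofReal ((t - τ) ^ (α t τ - 1) / Real.Gamma (α t τ)))
      ≤ ∫⁻ _ in Set.Ioc a b, ENNReal.ofReal K :=
        MeasureTheory.setLIntegral_mono_ae' measurableSet_Ioc
          (Filter.Eventually.of_forall key)
    _ = ENNReal.ofReal K * volume (Set.Ioc a b) := MeasureTheory.setLIntegral_const _ _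
    _ < ⊤ := ENNReal.mul_lt_top ENNReal.ofReal_lt_top measure_Ioc_lt_top
end

section
/- (Noether's theorem for variable-order fractional variational problems.) Under the setting of the variable-order fractional variational problem, suppose q satisfies the Euler–Lagrange equation ∂₂L(along q)(t) + Σ_{i=1}^{n} (ₜD^{α_i}_b [∂_{i+2}L along q])(t) + Σ_{i=1}^{n} (ₐD^{β_i}_t [∂_{n+i+2}L along q])(t) = 0 on [a,b], and suppose the invariance identity ∂₂L(along q)(t)·ξ(t,q(t)) + Σ_{i=1}^{n} ∂_{i+2}L(along q)(t)·(ᶜₐD^{α_i}_t [s ↦ ξ(s,q(s))])(t) + Σ_{i=1}^{n} ∂_{n+i+2}L(along q)(t)·(ᶜₜD^{β_i}_b [s ↦ ξ(s,q(s))])(t) = 0 holds on [a,b]. Then for all t ∈ [a,b]: Σ_{i=1}^{n} D^{α_i}_−[ s ↦ ξ(s,q(s)), ∂_{i+2}L along q ](t) + Σ_{i=1}^{n} D^{β_i}_+[ s ↦ ξ(s,q(s)), ∂_{n+i+2}L along q ](t) = 0. -/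
open MeasureTheory Real

/-- `F` is absolutely continuous on `[a, b]`. -/
def AbsolutelyContinuousOn (F : ℝ → ℝ) (a b : ℝ) : Prop :=
  ∃ h : ℝ → ℝ, IntegrableOn h (Set.Icc a b) ∧
    ∀ t ∈ Set.Icc a b, F t = F a + ∫ τ in a..t, h τ

/-- Left Caputo derivative of variable order `γ(·,·)`. -/
noncomputable def caputoLeft (a : ℝ) (γ : ℝ → ℝ → ℝ) (f : ℝ → ℝ) (t : ℝ) : ℝ :=
  ∫ τ in a..t, (t - τ) ^ (-(γ t τ)) / Real.Gamma (1 - γ t τ) * deriv f τ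

/-- Right Caputo derivative of variable order `γ(·,·)`. -/
noncomputable def caputoRight (b : ℝ) (γ : ℝ → ℝ → ℝ) (f : ℝ → ℝ) (t : ℝ) : ℝ :=
  -∫ τ in t..b, (τ - t) ^ (-(γ τ t)) / Real.Gamma (1 - γ τ t) * deriv f τ

/-- Left Riemann–Liouville integral of variable order `1 − γ(·,·)`. -/
noncomputable def leftRLint (a : ℝ) (γ : ℝ → ℝ → ℝ) (g : ℝ → ℝ) (t : ℝ) : ℝ :=
  ∫ τ in a..t, (t - τ) ^ (-(γ t τ)) / Real.Gamma (1 - γ t τ) * g τ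

/-- Right Riemann–Liouville integral of variable order `1 − γ(·,·)`. -/
noncomputable def rightRLint (b : ℝ) (γ : ℝ → ℝ → ℝ) (g : ℝ → ℝ) (t : ℝ) : ℝ :=
  ∫ τ in t..b, (τ - t) ^ (-(γ τ t)) / Real.Gamma (1 - γ τ t) * g τ

/-- Left Riemann–Liouville derivative of variable order `γ(·,·)`. -/
noncomputable def leftRLderiv (a : ℝ) (γ : ℝ → ℝ → ℝ) (g : ℝ → ℝ) (t : ℝ) : ℝ :=
  deriv (leftRLint a γ g) t

/-- Right Riemann–Liouville derivative of variable order `γ(·,·)`. -/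
noncomputable def rightRLderiv (b : ℝ) (γ : ℝ → ℝ → ℝ) (g : ℝ → ℝ) (t : ℝ) : ℝ :=
  -deriv (rightRLint b γ g) t

/-- The operator `D^γ_−[f,g](t) = −f(t)·(ₜD^γ_b g)(t) + g(t)·(ᶜₐD^γ_t f)(t)`. -/
noncomputable def Dminus (a b : ℝ) (γ : ℝ → ℝ → ℝ) (f g : ℝ → ℝ) (t : ℝ) : ℝ :=
  -f t * rightRLderiv b γ g t + g t * caputoLeft a γ f t

/-- The operator `D^γ_+[f,g](t) = −f(t)·(ₐD^γ_t g)(t) + g(t)·(ᶜₜD^γ_b f)(t)`. -/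
noncomputable def Dplus (a b : ℝ) (γ : ℝ → ℝ → ℝ) (f g : ℝ → ℝ) (t : ℝ) : ℝ :=
  -f t * leftRLderiv a γ g t + g t * caputoRight b γ f t

/-- Noether's theorem for variable-order fractional
variational problems. -/
theorem noether_variable_order
    (a b : ℝ) (hab : a < b) (n : ℕ)
    (α β : Fin n → ℝ → ℝ → ℝ)
    (hα : ∀ i t τ, a ≤ τ → τ < t → t ≤ b → 0 < α i t τ ∧ α i t τ < 1)
    (hβ : ∀ i t τ, a ≤ τ → τ < t → t ≤ b → 0 < β i t τ ∧ β i t τ < 1)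
    (L : ℝ → ℝ → (Fin n → ℝ) → (Fin n → ℝ) → ℝ)
    (hL : ContDiff ℝ 1 (fun p : ℝ × ℝ × (Fin n → ℝ) × (Fin n → ℝ) =>
      L p.1 p.2.1 p.2.2.1 p.2.2.2))
    (q : ℝ → ℝ)
    (hq : ∀ t ∈ Set.Icc a b, DifferentiableAt ℝ q t)
    (hq' : ContinuousOn (deriv q) (Set.Icc a b))
    (ξ : ℝ → ℝ → ℝ) (Ξ : ℝ → ℝ) (hΞdef : ∀ t, Ξ t = ξ t (q t))
    (hΞ : ∀ t ∈ Set.Icc a b, DifferentiableAt ℝ Ξ t)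
    (hΞ' : ContinuousOn (deriv Ξ) (Set.Icc a b))
    -- partial derivatives of L along q
    (P₂ : ℝ → ℝ)
    (hP₂ : ∀ t, P₂ t = deriv (fun y => L t y
      (fun i => caputoLeft a (α i) q t) (fun i => caputoRight b (β i) q t)) (q t))
    (Pα : Fin n → ℝ → ℝ)
    (hPα : ∀ i t, Pα i t = deriv (fun y => L t (q t)
      (Function.update (fun j => caputoLeft a (α j) q t) i y)
      (fun j => caputoRight b (β j) q t)) (caputoLeft a (α i) q t))
    (Pβ : Fin n → ℝ → ℝ)
    (hPβ : ∀ i t, Pβ i t = deriv (fun y => L t (q t)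
      (fun j => caputoLeft a (α j) q t)
      (Function.update (fun j => caputoRight b (β j) q t) i y))
      (caputoRight b (β i) q t))
    -- existence of the Riemann–Liouville derivatives appearing
    (hPαI : ∀ i, AbsolutelyContinuousOn (rightRLint b (α i) (Pα i)) a b)
    (hPβI : ∀ i, AbsolutelyContinuousOn (leftRLint a (β i) (Pβ i)) a b)
    -- the Euler–Lagrange equation along q
    (hEL : ∀ t ∈ Set.Icc a b,
      P₂ t + (∑ i, rightRLderiv b (α i) (Pα i) t)
           + (∑ i, leftRLderiv a (β i) (Pβ i) t) = 0)
    -- the invariance identity along q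
    (hinv : ∀ t ∈ Set.Icc a b,
      P₂ t * Ξ t + (∑ i, Pα i t * caputoLeft a (α i) Ξ t)
                 + (∑ i, Pβ i t * caputoRight b (β i) Ξ t) = 0) :
    ∀ t ∈ Set.Icc a b,
      (∑ i, Dminus a b (α i) Ξ (Pα i) t)
        + (∑ i, Dplus a b (β i) Ξ (Pβ i) t) = 0 := by
  intro t ht
  have h1 := hEL t ht
  have h2 := hinv t ht
  have e1 : ∑ i, Dminus a b (α i) Ξ (Pα i) t
      = -Ξ t * (∑ i, rightRLderiv b (α i) (Pα i) t)
        + ∑ i, Pα i t * caputoLeft a (α i) Ξ t := by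
    simp [Dminus, Finset.sum_add_distrib, Finset.mul_sum, neg_mul, Finset.sum_neg_distrib]
  have e2 : ∑ i, Dplus a b (β i) Ξ (Pβ i) t
      = -Ξ t * (∑ i, leftRLderiv a (β i) (Pβ i) t)
        + ∑ i, Pβ i t * caputoRight b (β i) Ξ t := by
    simp [Dplus, Finset.sum_add_distrib, Finset.mul_sum, neg_mul, Finset.sum_neg_distrib]
  rw [e1, e2]
  linear_combination h2 - Ξ t * h1
end
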